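/- The function f(r) = √(√(1−r²)) · K(r) = (1−r²)^{1/4} K(r) is decreasing on [0,1), mapping [0,1) onto (0, π/2]. -/

import Mathlib

open Real Set Filter Topology

/-- Complete elliptic integral of the first kind. -/
noncomputable def ellK (r : ℝ) : ℝ :=
  ∫ θ in (0:ℝ)..(π / 2), 1 / Real.sqrt (1 - r ^ 2 * Real.sin θ ^ 2)

section aux
open MeasureTheory intervalIntegral

/-- The complete elliptic integral of second kind. -/
noncomputable def ellE (r : ℝ) : ℝ :=
  ∫ θ in (0:ℝ)..(π / 2), Real.sqrt (1 - r ^ 2 * Real.sin θ ^ 2)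

/-- `∫ D^{-3/2}`. -/
noncomputable def ellJ (r : ℝ) : ℝ :=
  ∫ θ in (0:ℝ)..(π / 2),
    1 / ((1 - r ^ 2 * Real.sin θ ^ 2) * Real.sqrt (1 - r ^ 2 * Real.sin θ ^ 2))

lemma Dpos {r : ℝ} (hr : r ^ 2 < 1) (θ : ℝ) : 0 < 1 - r ^ 2 * Real.sin θ ^ 2 := by
  nlinarith [Real.sin_sq_le_one θ, sq_nonneg r, sq_nonneg (Real.sin θ)]

lemma Dpos' {r : ℝ} (hr : r ^ 2 < 1) (θ : ℝ) : 0 < 1 - r ^ 2 * Real.cos θ ^ 2 := by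
  nlinarith [Real.cos_sq_le_one θ, sq_nonneg r, sq_nonneg (Real.cos θ)]

lemma D_ge {r : ℝ} (θ : ℝ) : 1 - r ^ 2 ≤ 1 - r ^ 2 * Real.sin θ ^ 2 := by
  nlinarith [Real.sin_sq_le_one θ, sq_nonneg r]

lemma cont_base {r : ℝ} : Continuous fun θ : ℝ => 1 - r ^ 2 * Real.sin θ ^ 2 := by
  fun_prop

lemma contK {r : ℝ} (hr : r ^ 2 < 1) :
    Continuous fun θ : ℝ => 1 / Real.sqrt (1 - r ^ 2 * Real.sin θ ^ 2) :=
  continuous_const.div (cont_base.sqrt) fun θ => (Real.sqrt_pos.2 (Dpos hr θ)).ne'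

lemma contE {r : ℝ} : Continuous fun θ : ℝ => Real.sqrt (1 - r ^ 2 * Real.sin θ ^ 2) :=
  cont_base.sqrt

lemma contJ {r : ℝ} (hr : r ^ 2 < 1) :
    Continuous fun θ : ℝ =>
      1 / ((1 - r ^ 2 * Real.sin θ ^ 2) * Real.sqrt (1 - r ^ 2 * Real.sin θ ^ 2)) :=
  continuous_const.div (cont_base.mul cont_base.sqrt) fun θ =>
    (mul_pos (Dpos hr θ) (Real.sqrt_pos.2 (Dpos hr θ))).ne'

lemma contS {r : ℝ} (hr : r ^ 2 < 1) :
    Continuous fun θ : ℝ =>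
      Real.sin θ ^ 2 / ((1 - r ^ 2 * Real.sin θ ^ 2) * Real.sqrt (1 - r ^ 2 * Real.sin θ ^ 2)) :=
  Continuous.div (by fun_prop) (cont_base.mul cont_base.sqrt) fun θ =>
    (mul_pos (Dpos hr θ) (Real.sqrt_pos.2 (Dpos hr θ))).ne'

/-- pointwise derivative in the parameter -/
lemma hasDerivAt_integrand {s x : ℝ} (h : x ^ 2 * s ^ 2 < 1) :
    HasDerivAt (fun y : ℝ => 1 / Real.sqrt (1 - y ^ 2 * s ^ 2))
      (x * (s ^ 2 / ((1 - x ^ 2 * s ^ 2) * Real.sqrt (1 - x ^ 2 * s ^ 2)))) x := by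
  have hD : 0 < 1 - x ^ 2 * s ^ 2 := by linarith
  have hq : 0 < Real.sqrt (1 - x ^ 2 * s ^ 2) := Real.sqrt_pos.2 hD
  have h1 : HasDerivAt (fun y : ℝ => 1 - y ^ 2 * s ^ 2) (-(2 * x * s ^ 2)) x := by
    simpa using ((hasDerivAt_pow 2 x).mul_const (s ^ 2)).const_sub 1
  have h2 := (Real.hasDerivAt_sqrt hD.ne').comp x h1
  have h3 := h2.inv hq.ne'
  have := Real.sq_sqrt hD.le
  simp only [Function.comp_def] at h3
  convert h3 using 1
  · rfl
  · rfl
  · funext y; rw [one_div]; rfl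
  · rw [Real.sq_sqrt hD.le]
    field_simp

lemma Gderiv {r θ : ℝ} (hD : 0 < 1 - r^2 * Real.sin θ^2) :
    HasDerivAt (fun θ : ℝ => -r^2 * (Real.sin θ * Real.cos θ * (Real.sqrt (1 - r^2 * Real.sin θ^2))⁻¹))
      ((1 - r^2) * (1 / ((1 - r^2*Real.sin θ^2) * Real.sqrt (1 - r^2*Real.sin θ^2)))
        - Real.sqrt (1 - r^2*Real.sin θ^2)) θ := by
  have hq : 0 < Real.sqrt (1 - r^2*Real.sin θ^2) := Real.sqrt_pos.2 hD
  have hsin := Real.hasDerivAt_sin θ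
  have hcos := Real.hasDerivAt_cos θ
  have hDθ : HasDerivAt (fun θ : ℝ => 1 - r^2 * Real.sin θ^2)
      (-(r^2 * (2 * Real.sin θ * Real.cos θ))) θ := by
    have := ((hsin.pow 2).const_mul (r^2)).const_sub 1
    convert this using 1
    · rfl
    · rfl
    · rfl
    push_cast
    ring
  have hsq := (Real.hasDerivAt_sqrt hD.ne').comp θ hDθ
  simp only [Function.comp_def] at hsq
  have hinv := hsq.inv hq.ne'
  have hprod := ((hsin.mul hcos).mul hinv).const_mul (-r^2 : ℝ)
  have hpy : Real.sin θ ^ 2 + Real.cos θ ^ 2 = 1 := Real.sin_sq_add_cos_sq θ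
  have hq2 : Real.sqrt (1 - r^2*Real.sin θ^2) ^ 2 = 1 - r^2*Real.sin θ^2 := Real.sq_sqrt hD.le
  have hc2 : Real.cos θ ^ 2 = 1 - Real.sin θ ^ 2 := by nlinarith [hpy]
  have e4 : Real.sqrt (1 - r^2*Real.sin θ^2) ^ 4 = (1 - r^2*Real.sin θ^2)^2 := by
    rw [show Real.sqrt (1 - r^2*Real.sin θ^2) ^ 4 = (Real.sqrt (1 - r^2*Real.sin θ^2)^2)^2 by ring, hq2]
  have e6 : Real.sqrt (1 - r^2*Real.sin θ^2) ^ 6 = (1 - r^2*Real.sin θ^2)^3 := by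
    rw [show Real.sqrt (1 - r^2*Real.sin θ^2) ^ 6 = (Real.sqrt (1 - r^2*Real.sin θ^2)^2)^3 by ring, hq2]
  convert hprod using 1
  · rfl
  · rfl
  · rfl
  simp only [Pi.mul_apply, Pi.inv_apply]
  field_simp
  ring_nf
  simp only [e4, e6, hq2, hc2]
  ring

/-- identity `(1-r²) J = E` via an explicit antiderivative. -/
lemma ell_identity {r : ℝ} (hr : r ^ 2 < 1) : (1 - r ^ 2) * ellJ r = ellE r := by
  have hzero : (∫ θ in (0:ℝ)..(π/2),
      ((1 - r^2) * (1 / ((1 - r^2*Real.sin θ^2) * Real.sqrt (1 - r^2*Real.sin θ^2)))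
        - Real.sqrt (1 - r^2*Real.sin θ^2)))
      = (fun θ : ℝ => -r^2 * (Real.sin θ * Real.cos θ * (Real.sqrt (1 - r^2 * Real.sin θ^2))⁻¹)) (π/2)
        - (fun θ : ℝ => -r^2 * (Real.sin θ * Real.cos θ * (Real.sqrt (1 - r^2 * Real.sin θ^2))⁻¹)) 0 := by
    refine intervalIntegral.integral_eq_sub_of_hasDerivAt (fun θ _ => Gderiv (Dpos hr θ)) ?_
    exact ((continuous_const.mul (contJ hr)).sub cont_base.sqrt).intervalIntegrable _ _
  rw [show ((fun θ : ℝ => -r^2 * (Real.sin θ * Real.cos θ * (Real.sqrt (1 - r^2 * Real.sin θ^2))⁻¹)) (π/2)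
        - (fun θ : ℝ => -r^2 * (Real.sin θ * Real.cos θ * (Real.sqrt (1 - r^2 * Real.sin θ^2))⁻¹)) 0) = 0
      by norm_num] at hzero
  rw [intervalIntegral.integral_sub (((contJ hr).intervalIntegrable _ _).const_mul (1 - r ^ 2))
    (cont_base.sqrt.intervalIntegrable _ _), intervalIntegral.integral_const_mul] at hzero
  unfold ellE ellJ
  linarith [hzero]

lemma cont_base' {r : ℝ} : Continuous fun θ : ℝ => 1 - r ^ 2 * Real.cos θ ^ 2 := by fun_prop
lemma contK' {r : ℝ} (hr : r ^ 2 < 1) :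
    Continuous fun θ : ℝ => 1 / Real.sqrt (1 - r ^ 2 * Real.cos θ ^ 2) :=
  continuous_const.div (cont_base'.sqrt) fun θ => (Real.sqrt_pos.2 (Dpos' hr θ)).ne'

lemma flip_integral (f : ℝ → ℝ) :
    (∫ θ in (0:ℝ)..(π/2), f (π/2 - θ)) = ∫ θ in (0:ℝ)..(π/2), f θ := by
  rw [intervalIntegral.integral_comp_sub_left f (π/2)]
  norm_num

lemma ellE_flip {r : ℝ} : ellE r = ∫ θ in (0:ℝ)..(π/2), Real.sqrt (1 - r ^ 2 * Real.cos θ ^ 2) := by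
  rw [ellE, ← flip_integral (fun θ => Real.sqrt (1 - r ^ 2 * Real.sin θ ^ 2))]
  simp [Real.sin_pi_div_two_sub]

lemma ellK_flip {r : ℝ} : ellK r = ∫ θ in (0:ℝ)..(π/2), 1 / Real.sqrt (1 - r ^ 2 * Real.cos θ ^ 2) := by
  rw [ellK, ← flip_integral (fun θ => 1 / Real.sqrt (1 - r ^ 2 * Real.sin θ ^ 2))]
  simp [Real.sin_pi_div_two_sub]

lemma ellE_le {r : ℝ} (hr : r ^ 2 < 1) : ellE r ≤ (1 - r ^ 2 / 2) * ellK r := by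
  have key : (∫ θ in (0:ℝ)..(π/2),
        (Real.sqrt (1 - r ^ 2 * Real.sin θ ^ 2) + Real.sqrt (1 - r ^ 2 * Real.cos θ ^ 2)))
      ≤ ∫ θ in (0:ℝ)..(π/2),
        (1 - r ^ 2 / 2) * (1 / Real.sqrt (1 - r ^ 2 * Real.sin θ ^ 2)
          + 1 / Real.sqrt (1 - r ^ 2 * Real.cos θ ^ 2)) := by
    have hpi := Real.pi_pos
    refine intervalIntegral.integral_mono_on (by linarith)
      ((cont_base.sqrt.add cont_base'.sqrt).intervalIntegrable _ _)
      ((continuous_const.mul ((contK hr).add (contK' hr))).intervalIntegrable _ _) ?_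
    intro θ _
    have hp := Dpos hr θ
    have hq := Dpos' hr θ
    set sp := Real.sqrt (1 - r ^ 2 * Real.sin θ ^ 2) with hsp
    set sq := Real.sqrt (1 - r ^ 2 * Real.cos θ ^ 2) with hsq
    have hsp0 : 0 < sp := Real.sqrt_pos.2 hp
    have hsq0 : 0 < sq := Real.sqrt_pos.2 hq
    have hsp2 : sp ^ 2 = 1 - r ^ 2 * Real.sin θ ^ 2 := Real.sq_sqrt hp.le
    have hsq2 : sq ^ 2 = 1 - r ^ 2 * Real.cos θ ^ 2 := Real.sq_sqrt hq.le
    have hsum : sp ^ 2 + sq ^ 2 = 2 - r ^ 2 := by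
      rw [hsp2, hsq2]
      nlinarith [Real.sin_sq_add_cos_sq θ]
    have h2 : 1 - r ^ 2 / 2 = (sp ^ 2 + sq ^ 2) / 2 := by linarith
    rw [h2, div_add_div _ _ hsp0.ne' hsq0.ne', div_mul_div_comm, le_div_iff₀ (by positivity)]
    nlinarith [sq_nonneg (sp - sq), mul_pos hsp0 hsq0, add_pos hsp0 hsq0,
      mul_nonneg (mul_nonneg hsp0.le hsq0.le) (sq_nonneg (sp - sq)),
      mul_nonneg (add_pos hsp0 hsq0).le (sq_nonneg (sp - sq))]
  rw [intervalIntegral.integral_add ((cont_base.sqrt).intervalIntegrable _ _)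
      ((cont_base'.sqrt).intervalIntegrable _ _),
    intervalIntegral.integral_const_mul,
    intervalIntegral.integral_add ((contK hr).intervalIntegrable _ _)
      ((contK' hr).intervalIntegrable _ _)] at key
  rw [← ellE_flip, ← ellE] at key
  rw [← ellK_flip, ← ellK] at key
  nlinarith [key]

lemma ellK_pos {r : ℝ} (hr : r ^ 2 < 1) : 0 < ellK r := by
  have := Real.pi_pos
  refine intervalIntegral_pos_of_pos_on ((contK hr).intervalIntegrable _ _) (fun x _ => ?_)
    (by linarith)
  exact div_pos one_pos (Real.sqrt_pos.2 (Dpos hr x))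

lemma hasDerivAt_ellK {r : ℝ} (h0 : 0 < r) (h1 : r < 1) :
    HasDerivAt ellK
      (r * ∫ θ in (0:ℝ)..(π / 2),
        Real.sin θ ^ 2 / ((1 - r ^ 2 * Real.sin θ ^ 2) * Real.sqrt (1 - r ^ 2 * Real.sin θ ^ 2)))
      r := by
  have hr2 : r ^ 2 < 1 := by nlinarith
  set b : ℝ := (1 + r) / 2 with hb
  have hb1 : b < 1 := by rw [hb]; linarith
  have hb0 : 0 < b := by rw [hb]; linarith
  have hbb : 0 < 1 - b ^ 2 := by nlinarith
  have hε : (0:ℝ) < (1 - r) / 2 := by linarith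
  have hball : ∀ x ∈ Metric.ball r ((1 - r) / 2), |x| ≤ b ∧ x ^ 2 < 1 := by
    intro x hx
    rw [Metric.mem_ball, Real.dist_eq, abs_lt] at hx
    constructor
    · rw [abs_le]; constructor <;> [nlinarith; nlinarith]
    · nlinarith
  have main := intervalIntegral.hasDerivAt_integral_of_dominated_loc_of_deriv_le
    (F := fun x θ => 1 / Real.sqrt (1 - x ^ 2 * Real.sin θ ^ 2))
    (F' := fun x θ => x * (Real.sin θ ^ 2 /
      ((1 - x ^ 2 * Real.sin θ ^ 2) * Real.sqrt (1 - x ^ 2 * Real.sin θ ^ 2))))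
    (bound := fun _ => b * (1 / ((1 - b ^ 2) * Real.sqrt (1 - b ^ 2))))
    (a := 0) (b := π / 2) (x₀ := r) (μ := volume) (Metric.ball_mem_nhds r hε)
    ?_ ?_ ?_ ?_ ?_ ?_
  · have h := main.2
    rw [intervalIntegral.integral_const_mul] at h
    exact h
  · filter_upwards [Metric.ball_mem_nhds r hε] with x hx
    exact (contK (hball x hx).2).aestronglyMeasurable
  · exact (contK hr2).intervalIntegrable _ _
  · exact (continuous_const.mul (contS hr2)).aestronglyMeasurable
  · refine Filter.Eventually.of_forall fun θ _ => fun x hx => ?_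
    obtain ⟨habs, hx2⟩ := hball x hx
    have hD : 1 - b ^ 2 ≤ 1 - x ^ 2 * Real.sin θ ^ 2 := by
      nlinarith [Real.sin_sq_le_one θ, sq_nonneg x, sq_nonneg (Real.sin θ), abs_nonneg x,
        sq_abs x, sq_le_sq' (abs_le.1 habs).1 (abs_le.1 habs).2]
    have hDpos : 0 < 1 - x ^ 2 * Real.sin θ ^ 2 := lt_of_lt_of_le hbb hD
    rw [Real.norm_eq_abs, abs_mul]
    have hfrac : Real.sin θ ^ 2 /
        ((1 - x ^ 2 * Real.sin θ ^ 2) * Real.sqrt (1 - x ^ 2 * Real.sin θ ^ 2))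
        ≤ 1 / ((1 - b ^ 2) * Real.sqrt (1 - b ^ 2)) := by
      apply div_le_div₀ (by norm_num) (Real.sin_sq_le_one θ)
        (by positivity)
      exact mul_le_mul hD (Real.sqrt_le_sqrt hD) (Real.sqrt_nonneg _) hDpos.le
    have habs2 : |Real.sin θ ^ 2 /
        ((1 - x ^ 2 * Real.sin θ ^ 2) * Real.sqrt (1 - x ^ 2 * Real.sin θ ^ 2))| =
        Real.sin θ ^ 2 /
        ((1 - x ^ 2 * Real.sin θ ^ 2) * Real.sqrt (1 - x ^ 2 * Real.sin θ ^ 2)) := by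
      apply abs_of_nonneg; positivity
    rw [habs2]
    exact mul_le_mul habs hfrac (by positivity) hb0.le
  · exact intervalIntegrable_const
  · refine Filter.Eventually.of_forall fun θ _ => fun x hx => ?_
    have hx2 := (hball x hx).2
    exact hasDerivAt_integrand (by nlinarith [Real.sin_sq_le_one θ, sq_nonneg (Real.sin θ)])

lemma ellK_continuousAt {r : ℝ} (hr : r ^ 2 < 1) : ContinuousAt ellK r := by
  have habs : |r| < 1 := by nlinarith [abs_nonneg r, sq_abs r]
  set b : ℝ := (1 + |r|) / 2 with hb
  have hb1 : b < 1 := by rw [hb]; linarith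
  have hb0 : 0 ≤ b := by positivity
  have hbb : 0 < 1 - b ^ 2 := by nlinarith
  have hε : (0:ℝ) < (1 - |r|) / 2 := by linarith
  have hball : ∀ x ∈ Metric.ball r ((1 - |r|) / 2), x ^ 2 ≤ b ^ 2 := by
    intro x hx
    rw [Metric.mem_ball, Real.dist_eq] at hx
    have : |x| ≤ b := by
      have := abs_sub_abs_le_abs_sub x r
      rw [hb]; linarith
    nlinarith [abs_nonneg x, sq_abs x]
  apply intervalIntegral.continuousAt_of_dominated_interval
    (bound := fun _ => 1 / Real.sqrt (1 - b ^ 2))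
  · filter_upwards [Metric.ball_mem_nhds r hε] with x hx
    have : x ^ 2 < 1 := lt_of_le_of_lt (hball x hx) (by nlinarith)
    exact (contK this).aestronglyMeasurable
  · filter_upwards [Metric.ball_mem_nhds r hε] with x hx
    refine Filter.Eventually.of_forall fun θ _ => ?_
    have hx2 : x ^ 2 ≤ b ^ 2 := hball x hx
    have hD : 1 - b ^ 2 ≤ 1 - x ^ 2 * Real.sin θ ^ 2 := by
      nlinarith [Real.sin_sq_le_one θ, sq_nonneg x, sq_nonneg (Real.sin θ)]
    have hDpos : 0 < 1 - x ^ 2 * Real.sin θ ^ 2 := lt_of_lt_of_le hbb hD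
    rw [Real.norm_eq_abs, abs_of_nonneg (by positivity)]
    apply div_le_div₀ (by norm_num) le_rfl (Real.sqrt_pos.2 hbb) (Real.sqrt_le_sqrt hD)
  · exact intervalIntegrable_const
  · refine Filter.Eventually.of_forall fun θ _ => ?_
    have : ContinuousAt (fun x : ℝ => 1 / Real.sqrt (1 - x ^ 2 * Real.sin θ ^ 2)) r := by
      apply ContinuousAt.div continuousAt_const
      · exact (Real.continuous_sqrt.continuousAt).comp (by fun_prop)
      · exact (Real.sqrt_pos.2 (Dpos hr θ)).ne'
    exact this

lemma sq_lt_one_of_Ico {r : ℝ} (hr : r ∈ Ico (0:ℝ) 1) : r ^ 2 < 1 := by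
  rcases hr with ⟨h0, h1⟩; nlinarith

lemma ellK_zero : ellK 0 = π / 2 := by
  simp [ellK]

/-- the derivative of the full function is nonpositive on `(0,1)` -/
lemma hasDerivAt_f {r : ℝ} (h0 : 0 < r) (h1 : r < 1) :
    ∃ d ≤ 0, HasDerivAt (fun x : ℝ => Real.sqrt (Real.sqrt (1 - x ^ 2)) * ellK x) d r := by
  have hr2 : r ^ 2 < 1 := by nlinarith
  have hw : 0 < 1 - r ^ 2 := by linarith
  have hB : 0 < Real.sqrt (1 - r ^ 2) := Real.sqrt_pos.2 hw
  have hA : 0 < Real.sqrt (Real.sqrt (1 - r ^ 2)) := Real.sqrt_pos.2 hB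
  have hB2 : Real.sqrt (1 - r ^ 2) ^ 2 = 1 - r ^ 2 := Real.sq_sqrt hw.le
  have hA2 : Real.sqrt (Real.sqrt (1 - r ^ 2)) ^ 2 = Real.sqrt (1 - r ^ 2) :=
    Real.sq_sqrt hB.le
  -- derivative of the outer factor
  have hw' : HasDerivAt (fun x : ℝ => 1 - x ^ 2) (-(2 * r)) r := by
    simpa using (hasDerivAt_pow 2 r).const_sub 1
  have h1' := (Real.hasDerivAt_sqrt hw.ne').comp r hw'
  simp only [Function.comp_def] at h1'
  have h2' := (Real.hasDerivAt_sqrt hB.ne').comp r h1'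
  simp only [Function.comp_def] at h2'
  have hK := hasDerivAt_ellK h0 h1
  set S : ℝ := ∫ θ in (0:ℝ)..(π / 2),
      Real.sin θ ^ 2 / ((1 - r ^ 2 * Real.sin θ ^ 2) * Real.sqrt (1 - r ^ 2 * Real.sin θ ^ 2))
    with hSdef
  -- r² S = J - K
  have hS : r ^ 2 * S = ellJ r - ellK r := by
    rw [hSdef, ← intervalIntegral.integral_const_mul, ellJ, ellK,
      ← intervalIntegral.integral_sub ((contJ hr2).intervalIntegrable _ _)
        ((contK hr2).intervalIntegrable _ _)]
    apply intervalIntegral.integral_congr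
    intro θ _
    have hD := Dpos hr2 θ
    have hq := Real.sqrt_pos.2 hD
    field_simp
    ring
  -- key estimate
  have hkey : (1 - r ^ 2) * S ≤ ellK r / 2 := by
    have hEle := ellE_le hr2
    have hid := ell_identity hr2
    have h3 : r ^ 2 * ((1 - r ^ 2) * S) ≤ r ^ 2 * (ellK r / 2) := by
      have : (1 - r ^ 2) * (r ^ 2 * S) = (1 - r ^ 2) * ellJ r - (1 - r ^ 2) * ellK r := by
        rw [hS]; ring
      nlinarith [this]
    exact le_of_mul_le_mul_left (by linarith [h3]) (by positivity : (0:ℝ) < r ^ 2)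
  refine ⟨_, ?_, h2'.mul hK⟩
  have hKpos := ellK_pos hr2
  -- sign of the derivative
  have hball : Real.sqrt (Real.sqrt (1 - r ^ 2)) * (r * S) ≤
      r * ellK r / (2 * Real.sqrt (Real.sqrt (1 - r ^ 2)) * Real.sqrt (1 - r ^ 2)) := by
    rw [le_div_iff₀ (by positivity)]
    have expand : Real.sqrt (Real.sqrt (1 - r ^ 2)) * (r * S) *
        (2 * Real.sqrt (Real.sqrt (1 - r ^ 2)) * Real.sqrt (1 - r ^ 2)) =
        2 * r * ((1 - r ^ 2) * S) := by
      calc Real.sqrt (Real.sqrt (1 - r ^ 2)) * (r * S) *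
          (2 * Real.sqrt (Real.sqrt (1 - r ^ 2)) * Real.sqrt (1 - r ^ 2))
          = 2 * r * S * (Real.sqrt (Real.sqrt (1 - r ^ 2)) ^ 2 * Real.sqrt (1 - r ^ 2)) := by ring
        _ = 2 * r * S * (Real.sqrt (1 - r ^ 2) ^ 2) := by rw [hA2]; ring
        _ = 2 * r * ((1 - r ^ 2) * S) := by rw [hB2]; ring
    rw [expand]
    nlinarith [mul_le_mul_of_nonneg_left hkey (by positivity : (0:ℝ) ≤ 2 * r)]
  have heq : 1 / (2 * Real.sqrt (Real.sqrt (1 - r ^ 2))) *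
        (1 / (2 * Real.sqrt (1 - r ^ 2)) * -(2 * r)) * ellK r =
      -(r * ellK r / (2 * Real.sqrt (Real.sqrt (1 - r ^ 2)) * Real.sqrt (1 - r ^ 2))) := by
    field_simp
  rw [heq]
  linarith [hball]

lemma rpow_integrable :
    IntervalIntegrable (fun θ : ℝ => (π / 2 - θ) ^ (-(3:ℝ)/4)) volume 0 (π / 2) := by
  have h := intervalIntegral.intervalIntegrable_rpow' (a := 0) (b := π/2) (r := -(3:ℝ)/4)
    (by norm_num)
  have h2 := h.comp_sub_left (π/2)
  simpa using h2.symm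

lemma f_le_bound {r : ℝ} (hr : r ∈ Ico (0:ℝ) 1) :
    Real.sqrt (Real.sqrt (1 - r ^ 2)) * ellK r ≤
      (1 - r ^ 2) ^ (8⁻¹ : ℝ) *
        ((π / 2) ^ ((3:ℝ)/4) * ∫ θ in (0:ℝ)..(π / 2), (π / 2 - θ) ^ (-(3:ℝ)/4)) := by
  obtain ⟨hr0, hr1⟩ := hr
  have hr2 : r ^ 2 < 1 := by nlinarith
  have hw : 0 < 1 - r ^ 2 := by linarith
  have hpi := Real.pi_pos
  set w := 1 - r ^ 2 with hwdef
  have key : (∫ θ in (0:ℝ)..(π/2),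
        Real.sqrt (Real.sqrt w) * (1 / Real.sqrt (1 - r ^ 2 * Real.sin θ ^ 2)))
      ≤ ∫ θ in (0:ℝ)..(π/2),
        w ^ (8⁻¹ : ℝ) * ((π / 2) ^ ((3:ℝ)/4) * (π / 2 - θ) ^ (-(3:ℝ)/4)) := by
    apply intervalIntegral.integral_mono_ae_restrict (by linarith)
      ((continuous_const.mul (contK hr2)).intervalIntegrable _ _)
      ((rpow_integrable.const_mul _).const_mul _)
    have hne : ∀ᵐ θ ∂(volume.restrict (Icc (0:ℝ) (π/2))), θ ≠ π/2 := by
      apply ae_restrict_of_ae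
      rw [ae_iff]
      simpa using Real.volume_singleton (π/2)
    filter_upwards [hne, ae_restrict_mem measurableSet_Icc] with θ hθne hθmem
    obtain ⟨hθ0, hθpi⟩ := hθmem
    have hu : 0 < π / 2 - θ := lt_of_le_of_ne (by linarith) (by intro h; exact hθne (by linarith))
    have hcos : 2 / π * (π / 2 - θ) ≤ Real.cos θ := by
      have h := Real.one_sub_mul_le_cos hθ0 hθpi
      have heq : 1 - 2 / π * θ = 2 / π * (π / 2 - θ) := by field_simp
      linarith [heq ▸ h]
    have hcos0 : 0 < Real.cos θ := lt_of_lt_of_le (by positivity) hcos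
    set D := 1 - r ^ 2 * Real.sin θ ^ 2 with hD
    have hDpos : 0 < D := Dpos hr2 θ
    have hDw : w ≤ D := by
      rw [hD, hwdef]
      nlinarith [Real.sin_sq_le_one θ, sq_nonneg (Real.sin θ)]
    have hDc : Real.cos θ ^ 2 ≤ D := by
      rw [hD]
      nlinarith [Real.sin_sq_add_cos_sq θ, sq_nonneg (Real.sin θ), sq_nonneg r]
    have h1 : w ^ ((1:ℝ)/4) ≤ D ^ ((1:ℝ)/4) := Real.rpow_le_rpow hw.le hDw (by norm_num)
    have h2 : Real.cos θ ^ ((3:ℝ)/2) ≤ D ^ ((3:ℝ)/4) := by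
      have hcc : Real.cos θ ^ ((3:ℝ)/2) = (Real.cos θ ^ 2) ^ ((3:ℝ)/4) := by
        rw [← Real.rpow_natCast (Real.cos θ) 2, ← Real.rpow_mul hcos0.le]
        norm_num
      rw [hcc]
      exact Real.rpow_le_rpow (by positivity) hDc (by norm_num)
    have hsplit : w ^ ((1:ℝ)/4) * Real.cos θ ^ ((3:ℝ)/2) ≤ D := by
      calc w ^ ((1:ℝ)/4) * Real.cos θ ^ ((3:ℝ)/2)
          ≤ D ^ ((1:ℝ)/4) * D ^ ((3:ℝ)/4) :=
            mul_le_mul h1 h2 (by positivity) (by positivity)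
        _ = D := by
            rw [← Real.rpow_add hDpos]
            norm_num
    have hlow : w ^ (8⁻¹:ℝ) * ((2/π) ^ ((3:ℝ)/4) * (π/2 - θ) ^ ((3:ℝ)/4)) ≤ Real.sqrt D := by
      rw [Real.sqrt_eq_rpow]
      have hc34 : (2/π) ^ ((3:ℝ)/4) * (π/2 - θ) ^ ((3:ℝ)/4) ≤ Real.cos θ ^ ((3:ℝ)/4) := by
        rw [← Real.mul_rpow (by positivity) hu.le]
        exact Real.rpow_le_rpow (by positivity) hcos (by norm_num)
      have step : w ^ (8⁻¹:ℝ) * Real.cos θ ^ ((3:ℝ)/4) ≤ D ^ ((1:ℝ)/2) := by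
        have hstep2 : (w ^ ((1:ℝ)/4) * Real.cos θ ^ ((3:ℝ)/2)) ^ ((1:ℝ)/2) ≤ D ^ ((1:ℝ)/2) :=
          Real.rpow_le_rpow (by positivity) hsplit (by norm_num)
        calc w ^ (8⁻¹:ℝ) * Real.cos θ ^ ((3:ℝ)/4)
            = (w ^ ((1:ℝ)/4) * Real.cos θ ^ ((3:ℝ)/2)) ^ ((1:ℝ)/2) := by
              rw [Real.mul_rpow (by positivity) (by positivity), ← Real.rpow_mul hw.le,
                ← Real.rpow_mul hcos0.le]
              norm_num
          _ ≤ D ^ ((1:ℝ)/2) := hstep2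
      calc w ^ (8⁻¹:ℝ) * ((2/π) ^ ((3:ℝ)/4) * (π/2 - θ) ^ ((3:ℝ)/4))
          ≤ w ^ (8⁻¹:ℝ) * Real.cos θ ^ ((3:ℝ)/4) :=
            mul_le_mul_of_nonneg_left hc34 (by positivity)
        _ ≤ D ^ ((1:ℝ)/2) := step
    have hsw : Real.sqrt (Real.sqrt w) = w ^ ((1:ℝ)/4) := by
      rw [Real.sqrt_eq_rpow, Real.sqrt_eq_rpow, ← Real.rpow_mul hw.le]
      norm_num
    rw [hsw]
    simp only [Pi.mul_apply]
    rw [mul_one_div, div_le_iff₀ (Real.sqrt_pos.2 hDpos)]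
    calc w ^ ((1:ℝ)/4)
        = (w ^ (8⁻¹:ℝ) * ((π/2) ^ ((3:ℝ)/4) * (π/2 - θ) ^ (-(3:ℝ)/4))) *
          (w ^ (8⁻¹:ℝ) * ((2/π) ^ ((3:ℝ)/4) * (π/2 - θ) ^ ((3:ℝ)/4))) := by
          rw [show (w ^ (8⁻¹:ℝ) * ((π/2) ^ ((3:ℝ)/4) * (π/2 - θ) ^ (-(3:ℝ)/4))) *
              (w ^ (8⁻¹:ℝ) * ((2/π) ^ ((3:ℝ)/4) * (π/2 - θ) ^ ((3:ℝ)/4)))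
              = (w ^ (8⁻¹:ℝ) * w ^ (8⁻¹:ℝ)) * ((π/2) ^ ((3:ℝ)/4) * (2/π) ^ ((3:ℝ)/4)) *
                ((π/2 - θ) ^ (-(3:ℝ)/4) * (π/2 - θ) ^ ((3:ℝ)/4)) by ring]
          rw [← Real.rpow_add hw, ← Real.mul_rpow (by positivity) (by positivity),
            ← Real.rpow_add hu]
          rw [show π / 2 * (2/π) = 1 by field_simp]
          norm_num
      _ ≤ (w ^ (8⁻¹:ℝ) * ((π/2) ^ ((3:ℝ)/4) * (π/2 - θ) ^ (-(3:ℝ)/4))) * Real.sqrt D :=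
          mul_le_mul_of_nonneg_left hlow (by positivity)
  rw [intervalIntegral.integral_const_mul] at key
  rw [intervalIntegral.integral_const_mul, intervalIntegral.integral_const_mul] at key
  exact key

end aux

/-- `r ↦ (1−r²)^{1/4} K(r)` is decreasing on `[0,1)`, mapping `[0,1)` onto `(0, π/2]`. -/
theorem antitoneOn_rt_rt_mul_ellK :
    AntitoneOn (fun r : ℝ => Real.sqrt (Real.sqrt (1 - r ^ 2)) * ellK r) (Ico 0 1) ∧
    (fun r : ℝ => Real.sqrt (Real.sqrt (1 - r ^ 2)) * ellK r) '' Ico 0 1 = Ioc 0 (π / 2) := by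
  have hpi := Real.pi_pos
  set f : ℝ → ℝ := fun r => Real.sqrt (Real.sqrt (1 - r ^ 2)) * ellK r with hf
  have hcont : ContinuousOn f (Ico 0 1) := by
    intro r hr
    have hr2 := sq_lt_one_of_Ico hr
    exact ((Real.continuous_sqrt.comp (Real.continuous_sqrt.comp
      (by fun_prop : Continuous fun x : ℝ => 1 - x ^ 2))).continuousAt.mul
      (ellK_continuousAt hr2)).continuousWithinAt
  have hanti : AntitoneOn f (Ico 0 1) := by
    apply antitoneOn_of_deriv_nonpos (convex_Ico 0 1) hcont
    · rw [interior_Ico]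
      intro r hr
      obtain ⟨d, _, hdd⟩ := hasDerivAt_f hr.1 hr.2
      exact hdd.differentiableAt.differentiableWithinAt
    · rw [interior_Ico]
      intro r hr
      obtain ⟨d, hd, hdd⟩ := hasDerivAt_f hr.1 hr.2
      rw [hdd.deriv]
      exact hd
  have hf0 : f 0 = π / 2 := by
    rw [hf]
    simp [ellK_zero]
  have hmem0 : (0:ℝ) ∈ Ico (0:ℝ) 1 := ⟨le_refl 0, by norm_num⟩
  refine ⟨hanti, ?_⟩
  apply Subset.antisymm
  · rintro y ⟨r, hr, rfl⟩
    have hr2 := sq_lt_one_of_Ico hr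
    have hw : 0 < 1 - r ^ 2 := by linarith
    constructor
    · exact mul_pos (Real.sqrt_pos.2 (Real.sqrt_pos.2 hw)) (ellK_pos hr2)
    · calc f r ≤ f 0 := hanti hmem0 hr hr.1
        _ = π / 2 := hf0
  · rintro y ⟨hy0, hy2⟩
    set C : ℝ := (π / 2) ^ ((3:ℝ)/4) * ∫ θ in (0:ℝ)..(π / 2), (π / 2 - θ) ^ (-(3:ℝ)/4) with hC
    have hfC : ∀ r ∈ Ico (0:ℝ) 1, f r ≤ (1 - r ^ 2) ^ (8⁻¹ : ℝ) * C := fun r hr => f_le_bound hr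
    have hCpos : 0 < C := by
      have h0 := hfC 0 hmem0
      rw [hf0] at h0
      norm_num at h0
      linarith
    set w₀ : ℝ := min 1 ((y / C) ^ 8) with hw₀
    have hw₀pos : 0 < w₀ := lt_min one_pos (by positivity)
    have hw₀le : w₀ ≤ 1 := min_le_left _ _
    set r₁ : ℝ := Real.sqrt (1 - w₀ / 2) with hr₁
    have hr₁sq : r₁ ^ 2 = 1 - w₀ / 2 := Real.sq_sqrt (by linarith)
    have hr₁mem : r₁ ∈ Ico (0:ℝ) 1 := by
      constructor
      · exact Real.sqrt_nonneg _
      · have h := Real.sqrt_lt_sqrt (show (0:ℝ) ≤ 1 - w₀ / 2 by linarith)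
          (show 1 - w₀ / 2 < 1 by linarith)
        rw [Real.sqrt_one] at h
        exact h
    have hfr₁ : f r₁ ≤ y := by
      have h1 := hfC r₁ hr₁mem
      have h2 : (1 - r₁ ^ 2) ^ (8⁻¹ : ℝ) ≤ ((y / C) ^ 8) ^ (8⁻¹ : ℝ) := by
        apply Real.rpow_le_rpow (by rw [hr₁sq]; linarith) _ (by norm_num)
        rw [hr₁sq]
        have := min_le_right 1 ((y / C) ^ 8)
        linarith
      have h3 : ((y / C) ^ 8) ^ (8⁻¹ : ℝ) = y / C := by
        rw [← Real.rpow_natCast (y / C) 8, ← Real.rpow_mul (by positivity)]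
        norm_num
      calc f r₁ ≤ (1 - r₁ ^ 2) ^ (8⁻¹ : ℝ) * C := h1
        _ ≤ ((y / C) ^ 8) ^ (8⁻¹ : ℝ) * C := by
            apply mul_le_mul_of_nonneg_right h2 hCpos.le
        _ = y / C * C := by rw [h3]
        _ = y := div_mul_cancel₀ y hCpos.ne'
    have hsub : Icc (0:ℝ) r₁ ⊆ Ico (0:ℝ) 1 := fun x hx =>
      ⟨hx.1, lt_of_le_of_lt hx.2 hr₁mem.2⟩
    have hIVT := intermediate_value_Icc' hr₁mem.1 (hcont.mono hsub)
    have hymem : y ∈ Icc (f r₁) (f 0) := ⟨hfr₁, hf0 ▸ hy2⟩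
    obtain ⟨r, hrmem, hry⟩ := hIVT hymem
    exact ⟨r, hsub hrmem, hry⟩
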